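/- Let the formation control system be a triangulated formation system induced by a triangulated Laman graph G on n vertices, and let p be a critical point of the potential Φ such that the framework (G,p) is strongly rigid. Then the critical orbit O_p is exponentially stable (the signature of the Hessian H_p is (2n−3, 0, 3)), and moreover ‖x_i − x_j‖ = d̄_{ij} for every edge (i,j) ∈ E. -/

import Mathlib

open scoped BigOperators

noncomputable section

/-- Points in the Euclidean plane. -/
abbrev Pt : Type := EuclideanSpace ℝ (Fin 2)

/-- The flattened space of planar configurations indexed by `ι`
(two real coordinates for each vertex). -/
abbrev Conf (ι : Type*) : Type _ := EuclideanSpace ℝ (ι × Fin 2)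

/-- The position of agent `i` in the configuration `p`. -/
def pt {ι : Type*} (p : Conf ι) (i : ι) : Pt := WithLp.toLp 2 (fun c : Fin 2 => p (i, c))

/-- The sub-configuration of `p` on the vertices in `S`. -/
def restr {ι : Type*} (S : Set ι) (p : Conf ι) : Conf ↥S := WithLp.toLp 2 (fun ic : ↥S × Fin 2 => p ((ic.1 : ι), ic.2))

/-- The configuration space `P_G`: embeddings of the vertex set in the plane for which
adjacent vertices have distinct positions. -/
def configSpace {ι : Type*} (G : SimpleGraph ι) : Set (Conf ι) :=
  {p | ∀ i j : ι, G.Adj i j → pt p i ≠ pt p j}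

/-- A Henneberg sequence for a triangulated Laman graph `G`, encoded by the order
`ord` in which the vertices appear, and for every step `l ≥ 2` the two earlier steps
`par1 l`, `par2 l`, whose (adjacent) vertices the new vertex `ord l` is joined to.
The edges of `G` are exactly the initial edge together with the edges created at
each step. -/
structure Henneberg {ι : Type*} (G : SimpleGraph ι) : Type _ where
  two_le : 2 ≤ Nat.card ι
  ord : Fin (Nat.card ι) ≃ ι
  par1 : Fin (Nat.card ι) → Fin (Nat.card ι)
  par2 : Fin (Nat.card ι) → Fin (Nat.card ι)
  par1_lt : ∀ l : Fin (Nat.card ι), 2 ≤ (l : ℕ) → par1 l < l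
  par2_lt : ∀ l : Fin (Nat.card ι), 2 ≤ (l : ℕ) → par2 l < l
  par_ne : ∀ l : Fin (Nat.card ι), 2 ≤ (l : ℕ) → par1 l ≠ par2 l
  par_adj : ∀ l : Fin (Nat.card ι), 2 ≤ (l : ℕ) → G.Adj (ord (par1 l)) (ord (par2 l))
  edge_iff : ∀ i j : ι, G.Adj i j ↔
    (s(i, j) = s(ord ⟨0, by omega⟩, ord ⟨1, by omega⟩) ∨
      ∃ l : Fin (Nat.card ι), 2 ≤ (l : ℕ) ∧
        (s(i, j) = s(ord (par1 l), ord l) ∨ s(i, j) = s(ord (par2 l), ord l)))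

/-- A graph is a triangulated Laman graph if it is (essentially) a single vertex, or
it can be built by a Henneberg sequence in which each new vertex is joined to the two
endpoints of an existing edge. -/
def IsTriangulatedLaman {ι : Type*} (G : SimpleGraph ι) : Prop :=
  Nat.card ι ≤ 1 ∨ Nonempty (Henneberg G)

open Classical in
/-- The potential `Φ` induced by `G`, with control laws `f i j = u_{ij}(⬝, d̄_{ij})`:
`Φ(p) = Σ_{(i,j) ∈ E} ∫_1^{‖x_i - x_j‖} s u_{ij}(s, d̄_{ij}) ds`
(each edge is counted once; the double sum counts it twice, whence the factor 1/2). -/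
def potential {ι : Type*} [Fintype ι] (G : SimpleGraph ι) (f : ι → ι → ℝ → ℝ)
    (p : Conf ι) : ℝ :=
  (1 / 2) * ∑ i : ι, ∑ j : ι,
    if G.Adj i j then ∫ s in (1 : ℝ)..(dist (pt p i) (pt p j)), s * f i j s else 0

open Classical in
/-- The right-hand side of the formation control system
`ẋ_i = Σ_{j ∈ N_i} u_{ij}(‖x_i - x_j‖, d̄_{ij}) (x_j - x_i)`. -/
def formationField {ι : Type*} [Fintype ι] (G : SimpleGraph ι) (f : ι → ι → ℝ → ℝ)
    (p : Conf ι) : Conf ι :=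
  WithLp.toLp 2 (fun ic : ι × Fin 2 => ∑ j : ι,
    if G.Adj ic.1 j then f ic.1 j (dist (pt p ic.1) (pt p j)) * (p (j, ic.2) - p (ic.1, ic.2))
    else 0)

/-- A monotone attraction/repulsion function: `f` is C¹ on `ℝ_{>0}`,
`d(x f(x))/dx > 0` for `x > 0`, `f` has a unique (positive) zero, and
`∫_x^1 s f(s) ds → -∞` as `x → 0⁺`. -/
structure IsMonoAttRep (f : ℝ → ℝ) : Prop where
  contDiff : ContDiffOn ℝ 1 f (Set.Ioi 0)
  deriv_pos : ∀ x : ℝ, 0 < x → 0 < deriv (fun y => y * f y) x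
  unique_zero : ∃! x : ℝ, 0 < x ∧ f x = 0
  collision : Filter.Tendsto (fun x : ℝ => ∫ s in x..(1 : ℝ), s * f s)
    (nhdsWithin 0 (Set.Ioi 0)) Filter.atBot

/-- 2×2 rotation matrices. -/
def IsRotation (θ : Matrix (Fin 2) (Fin 2) ℝ) : Prop := θ * θ.transpose = 1 ∧ θ.det = 1

/-- The action of `γ = (θ, v) ∈ SE(2)` on configurations: `γ·p = (θ x_1 + v, …, θ x_n + v)`. -/
def se2Act {ι : Type*} (θ : Matrix (Fin 2) (Fin 2) ℝ) (v : Pt) (p : Conf ι) : Conf ι :=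
  WithLp.toLp 2 (fun ic : ι × Fin 2 => θ.mulVec (WithLp.ofLp (pt p ic.1)) ic.2 + v ic.2)

/-- The SE(2)-orbit `O_p` of a configuration `p`. -/
def se2Orbit {ι : Type*} (p : Conf ι) : Set (Conf ι) :=
  {q | ∃ θ v, IsRotation θ ∧ q = se2Act θ v p}

/-- Rotation by 90 degrees. -/
def rotJ : Matrix (Fin 2) (Fin 2) ℝ := !![0, -1; 1, 0]

/-- The infinitesimal rotation of a configuration. -/
def infRot {ι : Type*} (p : Conf ι) : Conf ι := WithLp.toLp 2 (fun ic : ι × Fin 2 => rotJ.mulVec (WithLp.ofLp (pt p ic.1)) ic.2)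

/-- The infinitesimal translation in coordinate direction `c`. -/
def transl (ι : Type*) (c : Fin 2) : Conf ι := WithLp.toLp 2 (fun ic : ι × Fin 2 => if ic.2 = c then 1 else 0)

/-- The tangent space at `p` of the SE(2)-orbit `O_p`. -/
def orbitTangent {ι : Type*} (p : Conf ι) : Submodule ℝ (Conf ι) :=
  Submodule.span ℝ {infRot p, transl ι 0, transl ι 1}

/-- The Hessian matrix `H_p = ∂²Φ(p)/∂p²`. -/
def hessianMat {ι : Type*} [Fintype ι] [DecidableEq ι] (Φ : Conf ι → ℝ) (p : Conf ι) :
    Matrix (ι × Fin 2) (ι × Fin 2) ℝ :=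
  Matrix.of fun a b =>
    iteratedFDeriv ℝ 2 Φ p ![EuclideanSpace.single a 1, EuclideanSpace.single b 1]

/-- The Hessian of `Φ` at `p` with respect to the coordinates of the vertices in `S`
(for `Φ` depending only on those coordinates this is the Hessian of the induced
function of the positions of the vertices in `S`). -/
def hessianMatOn {ι : Type*} [Fintype ι] [DecidableEq ι] (Φ : Conf ι → ℝ) (p : Conf ι) (S : Set ι) :
    Matrix (↥S × Fin 2) (↥S × Fin 2) ℝ :=
  Matrix.of fun a b => hessianMat Φ p ((a.1 : ι), a.2) ((b.1 : ι), b.2)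

open Classical in
/-- `N₊(A)`: the number of positive eigenvalues of a real symmetric matrix,
counted with multiplicity. -/
def nPos {m : Type*} [Finite m] (A : Matrix m m ℝ) : ℕ :=
  letI := Fintype.ofFinite m
  letI := Classical.decEq m
  if h : A.IsHermitian then Fintype.card {i // 0 < h.eigenvalues i} else 0

open Classical in
/-- `N₋(A)`: the number of negative eigenvalues of a real symmetric matrix,
counted with multiplicity. -/
def nNeg {m : Type*} [Finite m] (A : Matrix m m ℝ) : ℕ :=
  letI := Fintype.ofFinite m
  letI := Classical.decEq m
  if h : A.IsHermitian then Fintype.card {i // h.eigenvalues i < 0} else 0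

open Classical in
/-- `N₀(A)`: the number of zero eigenvalues of a real symmetric matrix,
counted with multiplicity. -/
def nZero {m : Type*} [Finite m] (A : Matrix m m ℝ) : ℕ :=
  letI := Fintype.ofFinite m
  letI := Classical.decEq m
  if h : A.IsHermitian then Fintype.card {i // h.eigenvalues i = 0} else 0

/-- `Φ` is an equivariant Morse function on `P_G`: it has finitely many critical orbits,
and each critical orbit is nondegenerate (the Hessian has exactly three zero eigenvalues). -/
def IsEquivariantMorse {ι : Type*} [Fintype ι] [DecidableEq ι] (G : SimpleGraph ι)
    (Φ : Conf ι → ℝ) : Prop :=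
  {O : Set (Conf ι) | ∃ p ∈ configSpace G, gradient Φ p = 0 ∧ O = se2Orbit p}.Finite ∧
  ∀ p ∈ configSpace G, gradient Φ p = 0 → nZero (hessianMat Φ p) = 3

/-- `i`, `j`, `k` form a 3-cycle of `G`. -/
def Is3Cycle {ι : Type*} (G : SimpleGraph ι) (i j k : ι) : Prop :=
  G.Adj i j ∧ G.Adj i k ∧ G.Adj j k

/-- A framework `(G, p)` is strongly rigid if every 3-cycle of `G` is embedded by `p`
as a nondegenerate triangle. -/
def StronglyRigid {ι : Type*} (G : SimpleGraph ι) (p : Conf ι) : Prop :=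
  ∀ i j k : ι, Is3Cycle G i j k →
    LinearIndependent ℝ ![pt p j - pt p i, pt p k - pt p i]

/-- The target distances satisfy the strict triangle inequalities associated with `G`. -/
def StrictTriangleIneqs {ι : Type*} (G : SimpleGraph ι) (dbar : ι → ι → ℝ) : Prop :=
  ∀ i j k : ι, Is3Cycle G i j k →
    dbar j k < dbar i j + dbar i k ∧ dbar i k < dbar i j + dbar j k ∧
      dbar i j < dbar i k + dbar j k

/-- A triangulated formation system: a formation control system induced by a
triangulated Laman graph, with target distances satisfying the strict triangle
inequalities, monotone attraction/repulsion control laws vanishing at the target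
distances, and whose potential is an equivariant Morse function. -/
structure IsTriFormation {ι : Type*} [Fintype ι] [DecidableEq ι] (G : SimpleGraph ι)
    (f : ι → ι → ℝ → ℝ) (dbar : ι → ι → ℝ) : Prop where
  laman : IsTriangulatedLaman G
  fsymm : ∀ i j, f i j = f j i
  dsymm : ∀ i j, dbar i j = dbar j i
  dpos : ∀ i j, G.Adj i j → 0 < dbar i j
  mono : ∀ i j, G.Adj i j → IsMonoAttRep (f i j)
  fzero : ∀ i j, G.Adj i j → f i j (dbar i j) = 0
  triangle : StrictTriangleIneqs G dbar
  morse : IsEquivariantMorse G (potential G f)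

/-- The (critical) orbit of `p` is exponentially stable: the Hessian of `Φ` at `p` has
exactly three zero eigenvalues and no negative eigenvalues (all the others positive). -/
def ExpStableAt {ι : Type*} [Fintype ι] [DecidableEq ι] (Φ : Conf ι → ℝ) (p : Conf ι) : Prop :=
  nZero (hessianMat Φ p) = 3 ∧ nNeg (hessianMat Φ p) = 0

/-- Generating relation for the independent partition: at each step `l ≥ 2` of the
Henneberg sequence in which the new vertex is aligned with its two parents, the two
new edges are related to the parent edge. -/
def triGen {ι : Type*} {G : SimpleGraph ι} (H : Henneberg G) (p : Conf ι) :
    Sym2 ι → Sym2 ι → Prop := fun e e' =>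
  ∃ l : Fin (Nat.card ι), 2 ≤ (l : ℕ) ∧
    Collinear ℝ {pt p (H.ord (H.par1 l)), pt p (H.ord (H.par2 l)), pt p (H.ord l)} ∧
    e' = s(H.ord (H.par1 l), H.ord (H.par2 l)) ∧
    (e = s(H.ord (H.par1 l), H.ord l) ∨ e = s(H.ord (H.par2 l), H.ord l))

/-- The independent partition of the edge set of `G` for the framework `(G, p)`,
computed along the Henneberg sequence `H`. -/
def indepPartition {ι : Type*} {G : SimpleGraph ι} (H : Henneberg G) (p : Conf ι) :
    Set (Set (Sym2 ι)) :=
  {C | ∃ e ∈ G.edgeSet, C = {e' | e' ∈ G.edgeSet ∧ Relation.EqvGen (triGen H p) e e'}}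

/-- The set `V_i` of vertices incident to the edges in a class `C`. -/
def classVerts {ι : Type*} (C : Set (Sym2 ι)) : Set ι := {v | ∃ e ∈ C, v ∈ e}


/-! ### Auxiliary lemmas for the proof of `stmt18` -/

section AuxStmt18

variable {ι : Type*} [Fintype ι]

/-- The coordinate projection as a continuous linear map. -/
def ptCLM (ι : Type*) [Fintype ι] (i : ι) : Conf ι →L[ℝ] Pt :=
  LinearMap.toContinuousLinearMap
    { toFun := fun p => pt p i
      map_add' := fun _ _ => by ext c; simp [pt]
      map_smul' := fun _ _ => by ext c; simp [pt] }

@[simp] lemma ptCLM_apply (i : ι) (p : Conf ι) : ptCLM ι i p = pt p i := rfl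

lemma normP_aux (a w : Pt) : ∀ s : ℝ, ‖a + s • w‖ =
    Real.sqrt (‖a‖^2 + 2 * (inner ℝ a w : ℝ) * s + ‖w‖^2 * s^2) := by
  intro s
  rw [← Real.sqrt_sq (norm_nonneg (a + s • w))]
  congr 1
  rw [norm_add_sq_real, real_inner_smul_right, norm_smul, mul_pow, Real.norm_eq_abs, sq_abs]
  ring

lemma P_hasDerivAt_aux (c b e t : ℝ) :
    HasDerivAt (fun s => c + 2 * b * s + e * s^2) (2 * b + e * (2 * t)) t := by
  have h1 : HasDerivAt (fun s : ℝ => 2 * b * s) (2 * b) t := by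
    simpa using (hasDerivAt_id t).const_mul (2 * b)
  have h2 : HasDerivAt (fun s : ℝ => e * s ^ 2) (e * (2 * t)) t := by
    simpa using (hasDerivAt_pow 2 t).const_mul e
  simpa [add_assoc] using (h1.add h2).const_add c

lemma V_hasDerivAt_aux {u : ℝ → ℝ} (hu : ContinuousOn u (Set.Ioi 0)) {r : ℝ} (hr : 0 < r) :
    HasDerivAt (fun x => ∫ s in (1:ℝ)..x, s * u s) (r * u r) r := by
  have hg : ContinuousOn (fun s => s * u s) (Set.Ioi 0) := continuousOn_id.mul hu
  have hsub : Set.uIcc (1:ℝ) r ⊆ Set.Ioi 0 := by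
    intro s hs
    have h0 : (0:ℝ) < min 1 r := lt_min one_pos hr
    exact lt_of_lt_of_le h0 hs.1
  apply intervalIntegral.integral_hasDerivAt_right
  · exact (hg.mono hsub).intervalIntegrable
  · exact (hg.stronglyMeasurableAtFilter isOpen_Ioi) r hr
  · exact hg.continuousAt (Ioi_mem_nhds hr)

lemma halfhelp_aux (x S : ℝ) : x / S = 1 / (2 * S) * (2 * x) := by
  rw [mul_comm, mul_one_div, mul_div_mul_left x S two_ne_zero]

lemma chi_hasDerivAt_aux (a w : Pt) {t : ℝ} (hne : a + t • w ≠ 0) :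
    HasDerivAt (fun s => ‖a + s • w‖)
      (((inner ℝ a w : ℝ) + ‖w‖^2 * t) / ‖a + t • w‖) t := by
  have h0 : 0 < ‖a + t • w‖ := norm_pos_iff.mpr hne
  have hPt : 0 < ‖a‖^2 + 2 * (inner ℝ a w : ℝ) * t + ‖w‖^2 * t^2 :=
    Real.sqrt_pos.mp (normP_aux a w t ▸ h0)
  have hs : HasDerivAt
      (fun s => Real.sqrt (‖a‖^2 + 2 * (inner ℝ a w : ℝ) * s + ‖w‖^2 * s^2))
      (1 / (2 * Real.sqrt (‖a‖^2 + 2 * (inner ℝ a w : ℝ) * t + ‖w‖^2 * t^2)) *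
        (2 * (inner ℝ a w : ℝ) + ‖w‖^2 * (2 * t))) t :=
    (Real.hasDerivAt_sqrt hPt.ne').comp t (P_hasDerivAt_aux _ _ _ t)
  have heq : (fun s => ‖a + s • w‖) =
      fun s => Real.sqrt (‖a‖^2 + 2 * (inner ℝ a w : ℝ) * s + ‖w‖^2 * s^2) :=
    funext (normP_aux a w)
  rw [heq, normP_aux a w t]
  convert hs using 1
  rw [show 2 * (inner ℝ a w : ℝ) + ‖w‖^2 * (2 * t) = 2 * ((inner ℝ a w : ℝ) + ‖w‖^2 * t) by ring]
  exact halfhelp_aux _ _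

lemma edge_hasDerivAt_aux {u : ℝ → ℝ} (hu : ContinuousOn u (Set.Ioi 0))
    (a w : Pt) {t : ℝ} (hne : a + t • w ≠ 0) :
    HasDerivAt (fun s => ∫ σ in (1:ℝ)..(‖a + s • w‖), σ * u σ)
      (u (‖a + t • w‖) * ((inner ℝ a w : ℝ) + ‖w‖^2 * t)) t := by
  have h0 : 0 < ‖a + t • w‖ := norm_pos_iff.mpr hne
  have hV := V_hasDerivAt_aux hu h0
  have h2 := hV.comp t (chi_hasDerivAt_aux a w hne)
  have h3 : HasDerivAt (fun s => ∫ σ in (1:ℝ)..(‖a + s • w‖), σ * u σ)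
      (‖a + t • w‖ * u ‖a + t • w‖ * (((inner ℝ a w : ℝ) + ‖w‖^2 * t) / ‖a + t • w‖)) t := h2
  convert h3 using 1
  rw [mul_comm (‖a + t • w‖) (u _), mul_assoc, mul_div_cancel₀ _ h0.ne']

lemma fcomp_hasDerivAt_aux {u : ℝ → ℝ} (hu : ContDiffOn ℝ 1 u (Set.Ioi 0))
    (a w : Pt) (hne : a ≠ 0) :
    HasDerivAt (fun s : ℝ => u ‖a + s • w‖) (deriv u ‖a‖ * ((inner ℝ a w : ℝ) / ‖a‖)) (0:ℝ) := by
  have h0 : 0 < ‖a‖ := norm_pos_iff.mpr hne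
  have hz : a + (0:ℝ) • w ≠ 0 := by simpa using hne
  have hd : DifferentiableAt ℝ u ‖a‖ :=
    (hu.contDiffAt (Ioi_mem_nhds h0)).differentiableAt one_ne_zero
  have hu' : HasDerivAt u (deriv u ‖a‖) ‖a‖ := hd.hasDerivAt
  have hcv : HasDerivAt (fun s : ℝ => ‖a + s • w‖) ((inner ℝ a w : ℝ) / ‖a‖) 0 := by
    have hchi := chi_hasDerivAt_aux a w hz
    convert hchi using 1
    simp
  have hu2 : HasDerivAt u (deriv u ‖a‖) ((fun s : ℝ => ‖a + s • w‖) 0) := by simpa using hu'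
  have := hu2.comp 0 hcv
  simpa [Function.comp_def] using this

lemma V_contDiffOn_aux {u : ℝ → ℝ} (hu : ContDiffOn ℝ 1 u (Set.Ioi 0)) :
    ContDiffOn ℝ 2 (fun x => ∫ s in (1:ℝ)..x, s * u s) (Set.Ioi 0) := by
  have h2 : (2 : WithTop ℕ∞) = 1 + 1 := by norm_num
  rw [h2, contDiffOn_succ_iff_deriv_of_isOpen isOpen_Ioi]
  refine ⟨fun x hx =>
    ((V_hasDerivAt_aux hu.continuousOn hx).differentiableAt).differentiableWithinAt,
    by simp, ?_⟩
  have heq : Set.EqOn (deriv fun x => ∫ s in (1:ℝ)..x, s * u s) (fun x => x * u x)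
      (Set.Ioi 0) := fun x hx => (V_hasDerivAt_aux hu.continuousOn hx).deriv
  exact (contDiffOn_id.mul hu).congr heq

lemma potential_contDiffAt_aux {G : SimpleGraph ι} {f : ι → ι → ℝ → ℝ}
    (hf : ∀ i j, G.Adj i j → ContDiffOn ℝ 1 (f i j) (Set.Ioi 0))
    {p : Conf ι} (hp : p ∈ configSpace G) : ContDiffAt ℝ 2 (potential G f) p := by
  unfold potential
  apply ContDiffAt.mul contDiffAt_const
  apply ContDiffAt.sum; intro i _
  apply ContDiffAt.sum; intro j _
  by_cases h : G.Adj i j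
  · simp only [if_pos h]
    have hne : pt p i ≠ pt p j := hp i j h
    have hdpos : 0 < dist (pt p i) (pt p j) := dist_pos.mpr hne
    have hdist : ContDiffAt ℝ 2 (fun q : Conf ι => dist (pt q i) (pt q j)) p :=
      ContDiffAt.dist ℝ ((ptCLM ι i).contDiff.contDiffAt)
        ((ptCLM ι j).contDiff.contDiffAt) hne
    exact (((V_contDiffOn_aux (hf i j h)).contDiffAt (Ioi_mem_nhds hdpos)).comp p hdist)
  · simp only [if_neg h]; exact contDiffAt_const

lemma configSpace_isOpen_aux (G : SimpleGraph ι) : IsOpen (configSpace G) := by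
  have hrw : configSpace G = ⋂ e ∈ {e : ι × ι | G.Adj e.1 e.2},
      {p : Conf ι | pt p e.1 ≠ pt p e.2} := by
    ext p
    constructor
    · intro h; exact Set.mem_iInter₂.mpr fun e he => h e.1 e.2 he
    · intro h i j hij; exact Set.mem_iInter₂.mp h (i, j) hij
  rw [hrw]
  apply Set.Finite.isOpen_biInter (Set.toFinite _)
  intro e _
  have hrw2 : {p : Conf ι | pt p e.1 ≠ pt p e.2} =
      (fun p : Conf ι => (pt p e.1, pt p e.2)) ⁻¹' {x : Pt × Pt | x.1 ≠ x.2} := rfl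
  rw [hrw2]
  exact (isOpen_ne_fun continuous_fst continuous_snd).preimage
    (((ptCLM ι e.1).continuous).prodMk ((ptCLM ι e.2).continuous))

lemma nZero_le_aux {m : Type*} [Finite m] (A : Matrix m m ℝ) : nZero A ≤ Nat.card m := by
  letI := Fintype.ofFinite m
  letI := Classical.decEq m
  unfold nZero
  split
  · rw [Nat.card_eq_fintype_card]
    exact Fintype.card_subtype_le _
  · exact Nat.zero_le _

lemma nNeg_eq_zero_aux {m : Type*} [Finite m] {A : Matrix m m ℝ}
    (h : ∀ (inst : Fintype m) (dec : DecidableEq m) (hh : A.IsHermitian) (i : m),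
      0 ≤ hh.eigenvalues i)
    (hherm : A.IsHermitian) : nNeg A = 0 := by
  letI := Fintype.ofFinite m
  letI := Classical.decEq m
  unfold nNeg
  rw [dif_pos hherm, Fintype.card_eq_zero_iff]
  exact ⟨fun i => absurd i.2 (not_lt.2 (h _ _ hherm i.1))⟩

lemma nPos_add_nZero_aux {m : Type*} [Finite m] {A : Matrix m m ℝ}
    (h : ∀ (inst : Fintype m) (dec : DecidableEq m) (hh : A.IsHermitian) (i : m),
      0 ≤ hh.eigenvalues i)
    (hherm : A.IsHermitian) : nPos A + nZero A = Nat.card m := by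
  letI := Fintype.ofFinite m
  letI := Classical.decEq m
  unfold nPos nZero
  rw [dif_pos hherm, dif_pos hherm, Fintype.card_subtype, Fintype.card_subtype,
    Nat.card_eq_fintype_card]
  have hc : Finset.filter (fun i => 0 < hherm.eigenvalues i) Finset.univ
      = Finset.filter (fun i => ¬ hherm.eigenvalues i = 0) Finset.univ := by
    apply Finset.filter_congr
    intro i _
    constructor
    · exact fun h' => h'.ne'
    · exact fun h' => lt_of_le_of_ne (h _ _ hherm i) (Ne.symm h')
  rw [hc, add_comm]
  exact Finset.card_filter_add_card_filter_not _

open Classical in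
lemma weights_zero_aux {G : SimpleGraph ι} (H : Henneberg G)
    {p : Conf ι} (hp : p ∈ configSpace G) {wt : ι → ι → ℝ}
    (hwsymm : ∀ i j, wt i j = wt j i)
    (hsr : StronglyRigid G p)
    (hequil : ∀ k : ι, ∑ j : ι, (if G.Adj k j then wt k j • (pt p k - pt p j) else 0) = 0) :
    ∀ i j, G.Adj i j → wt i j = 0 := by
  have hN2 : 2 ≤ Nat.card ι := H.two_le
  set N := Nat.card ι with hNdef
  have hadj_par1 : ∀ l : Fin N, 2 ≤ (l : ℕ) → G.Adj (H.ord (H.par1 l)) (H.ord l) :=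
    fun l hl => (H.edge_iff _ _).mpr (Or.inr ⟨l, hl, Or.inl rfl⟩)
  have hadj_par2 : ∀ l : Fin N, 2 ≤ (l : ℕ) → G.Adj (H.ord (H.par2 l)) (H.ord l) :=
    fun l hl => (H.edge_iff _ _).mpr (Or.inr ⟨l, hl, Or.inr rfl⟩)
  have key : ∀ m : ℕ, ∀ l : Fin N, N - (l : ℕ) ≤ m → 2 ≤ (l : ℕ) →
      wt (H.ord l) (H.ord (H.par1 l)) = 0 ∧ wt (H.ord l) (H.ord (H.par2 l)) = 0 := by
    intro m
    induction m with
    | zero => intro l hl _; have := l.isLt; omega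
    | succ m ih =>
      intro l hlm hl2
      set k := H.ord l with hkdef
      have hred : ∀ j, G.Adj k j → j ≠ H.ord (H.par1 l) → j ≠ H.ord (H.par2 l) →
          wt k j = 0 := by
        intro j hadj hj1 hj2
        rcases (H.edge_iff k j).mp hadj with hini | ⟨l', hl'2, hc⟩
        · rcases Sym2.eq_iff.mp hini with ⟨hk, _⟩ | ⟨hk, _⟩ <;>
          · have hl0 := H.ord.injective hk
            rw [hl0] at hl2
            simp at hl2
        · rcases hc with hc | hc <;> rcases Sym2.eq_iff.mp hc with ⟨hk, hj⟩ | ⟨hk, hj⟩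
          · have hpl : H.par1 l' = l := H.ord.injective hk.symm
            have hlt : l < l' := hpl ▸ H.par1_lt l' hl'2
            have h1 := (ih l' (by have := l'.isLt; omega) hl'2).1
            rw [hj, hwsymm]
            rw [hpl] at h1
            exact h1
          · have hll : l' = l := H.ord.injective hk.symm
            rw [hll] at hj
            exact absurd hj hj1
          · have hpl : H.par2 l' = l := H.ord.injective hk.symm
            have hlt : l < l' := hpl ▸ H.par2_lt l' hl'2
            have h1 := (ih l' (by have := l'.isLt; omega) hl'2).2
            rw [hj, hwsymm]
            rw [hpl] at h1
            exact h1
          · have hll : l' = l := H.ord.injective hk.symm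
            rw [hll] at hj
            exact absurd hj hj2
      have hj12 : H.ord (H.par1 l) ≠ H.ord (H.par2 l) :=
        fun h => H.par_ne l hl2 (H.ord.injective h)
      have hadj1 : G.Adj k (H.ord (H.par1 l)) := (hadj_par1 l hl2).symm
      have hadj2 : G.Adj k (H.ord (H.par2 l)) := (hadj_par2 l hl2).symm
      have hsum : ∑ j : ι, (if G.Adj k j then wt k j • (pt p k - pt p j) else 0)
          = wt k (H.ord (H.par1 l)) • (pt p k - pt p (H.ord (H.par1 l)))
            + wt k (H.ord (H.par2 l)) • (pt p k - pt p (H.ord (H.par2 l))) := by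
        rw [← Finset.sum_subset (Finset.subset_univ {H.ord (H.par1 l), H.ord (H.par2 l)})]
        · rw [Finset.sum_insert (by simp [hj12]), Finset.sum_singleton,
            if_pos hadj1, if_pos hadj2]
        · intro j _ hj
          simp only [Finset.mem_insert, Finset.mem_singleton, not_or] at hj
          by_cases ha : G.Adj k j
          · rw [if_pos ha, hred j ha hj.1 hj.2, zero_smul]
          · rw [if_neg ha]
      have heq := hequil k
      rw [hsum] at heq
      have hcyc : Is3Cycle G k (H.ord (H.par1 l)) (H.ord (H.par2 l)) :=
        ⟨hadj1, hadj2, H.par_adj l hl2⟩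
      have hli := hsr _ _ _ hcyc
      rw [LinearIndependent.pair_iff] at hli
      have hz := hli (-(wt k (H.ord (H.par1 l)))) (-(wt k (H.ord (H.par2 l)))) (by
        have hmod : (-(wt k (H.ord (H.par1 l)))) • (pt p (H.ord (H.par1 l)) - pt p k)
            + (-(wt k (H.ord (H.par2 l)))) • (pt p (H.ord (H.par2 l)) - pt p k)
            = wt k (H.ord (H.par1 l)) • (pt p k - pt p (H.ord (H.par1 l)))
            + wt k (H.ord (H.par2 l)) • (pt p k - pt p (H.ord (H.par2 l))) := by
          module
        rw [hmod]
        exact heq)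
      exact ⟨neg_eq_zero.mp hz.1, neg_eq_zero.mp hz.2⟩
  have hstep : ∀ l : Fin N, 2 ≤ (l : ℕ) →
      wt (H.ord l) (H.ord (H.par1 l)) = 0 ∧ wt (H.ord l) (H.ord (H.par2 l)) = 0 :=
    fun l h2 => key (N - (l : ℕ)) l le_rfl h2
  set i0 : Fin N := ⟨0, by omega⟩ with hi0
  set i1 : Fin N := ⟨1, by omega⟩ with hi1
  have hadj01 : G.Adj (H.ord i0) (H.ord i1) := (H.edge_iff _ _).mpr (Or.inl rfl)
  have hini : wt (H.ord i1) (H.ord i0) = 0 := by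
    have hred : ∀ j, G.Adj (H.ord i1) j → j ≠ H.ord i0 → wt (H.ord i1) j = 0 := by
      intro j hadj hj0
      rcases (H.edge_iff (H.ord i1) j).mp hadj with hini | ⟨l', hl'2, hc⟩
      · rcases Sym2.eq_iff.mp hini with ⟨hk, hj⟩ | ⟨hk, hj⟩
        · have h10 : i1 = i0 := H.ord.injective hk
          simp [hi0, hi1, Fin.ext_iff] at h10
        · exact absurd hj hj0
      · rcases hc with hc | hc <;> rcases Sym2.eq_iff.mp hc with ⟨hk, hj⟩ | ⟨hk, hj⟩
        · have hpl : H.par1 l' = i1 := H.ord.injective hk.symm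
          rw [hj, hwsymm]
          have h1 := (hstep l' hl'2).1
          rw [hpl] at h1
          exact h1
        · have hl1 : l' = i1 := H.ord.injective hk.symm
          rw [hl1] at hl'2
          simp [hi1] at hl'2
        · have hpl : H.par2 l' = i1 := H.ord.injective hk.symm
          rw [hj, hwsymm]
          have h1 := (hstep l' hl'2).2
          rw [hpl] at h1
          exact h1
        · have hl1 : l' = i1 := H.ord.injective hk.symm
          rw [hl1] at hl'2
          simp [hi1] at hl'2
    have heq := hequil (H.ord i1)
    rw [Finset.sum_eq_single (H.ord i0)] at heq
    · rw [if_pos hadj01.symm] at heq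
      rcases smul_eq_zero.mp heq with h | h
      · exact h
      · exact absurd (sub_eq_zero.mp h) (hp _ _ hadj01.symm)
    · intro j _ hj
      by_cases ha : G.Adj (H.ord i1) j
      · rw [if_pos ha, hred j ha hj, zero_smul]
      · rw [if_neg ha]
    · intro h; exact absurd (Finset.mem_univ _) h
  intro i j hadj
  rcases (H.edge_iff i j).mp hadj with hc | ⟨l', hl'2, hc⟩
  · rcases Sym2.eq_iff.mp hc with ⟨hk, hj⟩ | ⟨hk, hj⟩
    · rw [hk, hj, hwsymm]; exact hini
    · rw [hk, hj]; exact hini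
  · rcases hc with hc | hc <;> rcases Sym2.eq_iff.mp hc with ⟨hk, hj⟩ | ⟨hk, hj⟩
    · rw [hk, hj, hwsymm]; exact (hstep l' hl'2).1
    · rw [hk, hj]; exact (hstep l' hl'2).1
    · rw [hk, hj, hwsymm]; exact (hstep l' hl'2).2
    · rw [hk, hj]; exact (hstep l' hl'2).2

end AuxStmt18

end

set_option maxHeartbeats 1000000 in
/-- Corollary 4.5 of the paper. For a triangulated formation system, if
`p` is a critical point of the potential `Φ` and `(G, p)` is strongly rigid, then the
critical orbit `O_p` is exponentially stable — the signature of the Hessian `H_p` is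
`(2n - 3, 0, 3)` — and `‖x_i - x_j‖ = d̄_{ij}` for every edge `(i, j)` of `G`. -/
theorem stmt18 {ι : Type*} [Fintype ι] [DecidableEq ι] (n : ℕ)
    (hcard : Fintype.card ι = n) (G : SimpleGraph ι) (f : ι → ι → ℝ → ℝ)
    (dbar : ι → ι → ℝ) (hsys : IsTriFormation G f dbar)
    (p : Conf ι) (hp : p ∈ configSpace G)
    (hcrit : gradient (potential G f) p = 0) (hsr : StronglyRigid G p) :
    nPos (hessianMat (potential G f) p) = 2 * n - 3 ∧
    nNeg (hessianMat (potential G f) p) = 0 ∧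
    nZero (hessianMat (potential G f) p) = 3 ∧
    ∀ i j : ι, G.Adj i j → dist (pt p i) (pt p j) = dbar i j := by
  classical
  have hf1 : ∀ i j, G.Adj i j → ContDiffOn ℝ 1 (f i j) (Set.Ioi 0) :=
    fun i j h => (hsys.mono i j h).contDiff
  have hΦ2 : ∀ q ∈ configSpace G, ContDiffAt ℝ 2 (potential G f) q :=
    fun q hq => potential_contDiffAt_aux hf1 hq
  have hfderiv0 : fderiv ℝ (potential G f) p = 0 := by
    have h := hcrit
    unfold gradient at h
    have h2 := congrArg (InnerProductSpace.toDual ℝ (Conf ι)) h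
    simpa using h2
  have hlineDiff : ∀ (v : Conf ι) (s : ℝ) (i j : ι),
      dist (pt (p + s • v) i) (pt (p + s • v) j)
        = ‖(pt p i - pt p j) + s • (pt v i - pt v j)‖ := by
    intro v s i j
    rw [dist_eq_norm]
    congr 1
    simp only [← ptCLM_apply, map_add, map_smul]
    module
  have hsubne : ∀ (v : Conf ι) (t : ℝ) (i j : ι), p + t • v ∈ configSpace G → G.Adj i j →
      (pt p i - pt p j) + t • (pt v i - pt v j) ≠ 0 := by
    intro v t i j ht h
    have h2 : pt (p + t • v) i - pt (p + t • v) j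
        = (pt p i - pt p j) + t • (pt v i - pt v j) := by
      simp only [← ptCLM_apply, map_add, map_smul]
      module
    rw [← h2]
    exact sub_ne_zero.mpr (ht i j h)
  have hline : ∀ (v : Conf ι) (t : ℝ), p + t • v ∈ configSpace G →
      HasDerivAt (fun s : ℝ => potential G f (p + s • v))
        ((1/2) * ∑ i : ι, ∑ j : ι, if G.Adj i j then
            f i j ‖(pt p i - pt p j) + t • (pt v i - pt v j)‖ *
              ((inner ℝ (pt p i - pt p j) (pt v i - pt v j) : ℝ)
                + ‖pt v i - pt v j‖^2 * t) else 0) t := by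
    intro v t ht
    have hfun : (fun s : ℝ => potential G f (p + s • v))
        = fun s => (1/2) * ∑ i : ι, ∑ j : ι, if G.Adj i j then
            (∫ σ in (1:ℝ)..(‖(pt p i - pt p j) + s • (pt v i - pt v j)‖), σ * f i j σ)
          else 0 := by
      funext s
      unfold potential
      simp only [hlineDiff v s]
    rw [hfun]
    apply HasDerivAt.const_mul
    apply HasDerivAt.fun_sum
    intro i _
    apply HasDerivAt.fun_sum
    intro j _
    by_cases h : G.Adj i j
    · simp only [if_pos h]
      exact edge_hasDerivAt_aux (hf1 i j h).continuousOn _ _ (hsubne v t i j ht h)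
    · simp only [if_neg h]
      exact hasDerivAt_const _ _
  have hlinemap : ∀ (v : Conf ι) (t : ℝ), HasDerivAt (fun s : ℝ => p + s • v) v t := by
    intro v t
    simpa using ((hasDerivAt_id t).smul_const v).const_add p
  -- equilibrium at each vertex
  have hwt0 : ∀ k : ι, ∑ j : ι, (if G.Adj k j then
      f k j (dist (pt p k) (pt p j)) • (pt p k - pt p j) else 0) = 0 := by
    intro k
    have hscal : ∀ w : Pt,
        (inner ℝ (∑ j : ι, (if G.Adj k j then
          f k j (dist (pt p k) (pt p j)) • (pt p k - pt p j) else 0)) w : ℝ) = 0 := by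
      intro w
      set v : Conf ι := WithLp.toLp 2 (fun ic => if ic.1 = k then w ic.2 else 0 : (ι × Fin 2) → ℝ) with hv
      have hptv : ∀ i, pt v i = if i = k then w else 0 := by
        intro i; ext c
        by_cases h : i = k <;> simp [h, pt, hv]
      have h0mem : p + (0:ℝ) • v ∈ configSpace G := by simpa using hp
      have hW := hline v 0 h0mem
      have hd0 : HasDerivAt (fun s : ℝ => potential G f (p + s • v)) 0 0 := by
        have hΦd : DifferentiableAt ℝ (potential G f) p :=
          (hΦ2 p hp).differentiableAt (by norm_num)
        have hΦfd := hΦd.hasFDerivAt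
        rw [hfderiv0] at hΦfd
        have hp0 : p = p + (0:ℝ) • v := by simp
        rw [hp0] at hΦfd
        have h5 := hΦfd.comp_hasDerivAt 0 (hlinemap v 0)
        simpa [Function.comp_def] using h5
      have huniq := hd0.unique hW
      simp only [zero_smul, add_zero, mul_zero] at huniq
      have hswap : ∀ i j : ι, (if G.Adj i j then
          f i j ‖pt p i - pt p j‖ * (inner ℝ (pt p i - pt p j) (pt v i - pt v j) : ℝ) else 0)
        = (if G.Adj j i then
          f j i ‖pt p j - pt p i‖ * (inner ℝ (pt p j - pt p i) (pt v j - pt v i) : ℝ) else 0) := by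
        intro i j
        by_cases h : G.Adj i j
        · rw [if_pos h, if_pos h.symm, hsys.fsymm i j,
            show pt p j - pt p i = -(pt p i - pt p j) by module,
            show pt v j - pt v i = -(pt v i - pt v j) by module,
            inner_neg_neg, norm_neg]
        · rw [if_neg h, if_neg fun h' => h h'.symm]
      have hzero : ∀ i j : ι, i ≠ k → j ≠ k → (if G.Adj i j then
          f i j ‖pt p i - pt p j‖ * (inner ℝ (pt p i - pt p j) (pt v i - pt v j) : ℝ) else 0)
            = 0 := by
        intro i j hi hj
        by_cases h : G.Adj i j
        · rw [if_pos h, hptv i, hptv j, if_neg hi, if_neg hj]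
          simp
        · rw [if_neg h]
      have hkk : (if G.Adj k k then
          f k k ‖pt p k - pt p k‖ * (inner ℝ (pt p k - pt p k) (pt v k - pt v k) : ℝ) else 0)
            = 0 := by simp
      have hinner : ∀ i ∈ Finset.univ.erase k, (∑ j : ι, (if G.Adj i j then
          f i j ‖pt p i - pt p j‖ * (inner ℝ (pt p i - pt p j) (pt v i - pt v j) : ℝ) else 0))
          = (if G.Adj i k then
            f i k ‖pt p i - pt p k‖ * (inner ℝ (pt p i - pt p k) (pt v i - pt v k) : ℝ)
          else 0) := by
        intro i hi
        exact Finset.sum_eq_single k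
          (fun j _ hj => hzero i j (Finset.ne_of_mem_erase hi) hj)
          (fun h => absurd (Finset.mem_univ k) h)
      have hdouble : ∑ i : ι, ∑ j : ι, (if G.Adj i j then
          f i j ‖pt p i - pt p j‖ * (inner ℝ (pt p i - pt p j) (pt v i - pt v j) : ℝ) else 0)
          = 2 * ∑ j : ι, (if G.Adj k j then
            f k j ‖pt p k - pt p j‖ * (inner ℝ (pt p k - pt p j) (pt v k - pt v j) : ℝ)
          else 0) := by
        rw [← Finset.add_sum_erase Finset.univ _ (Finset.mem_univ k),
          Finset.sum_congr rfl hinner, Finset.sum_congr rfl (fun i _ => hswap i k)]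
        have herase : ∑ i ∈ Finset.univ.erase k, (if G.Adj k i then
            f k i ‖pt p k - pt p i‖ * (inner ℝ (pt p k - pt p i) (pt v k - pt v i) : ℝ) else 0)
            = ∑ i : ι, (if G.Adj k i then
            f k i ‖pt p k - pt p i‖ * (inner ℝ (pt p k - pt p i) (pt v k - pt v i) : ℝ)
          else 0) := by
          rw [← Finset.add_sum_erase Finset.univ _ (Finset.mem_univ k), hkk, zero_add]
        rw [herase]
        ring
      have hksum : ∑ j : ι, (if G.Adj k j then
          f k j ‖pt p k - pt p j‖ * (inner ℝ (pt p k - pt p j) (pt v k - pt v j) : ℝ)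
            else 0) = 0 := by
        rw [hdouble] at huniq
        linarith
      have hTk : ∀ j : ι, (if G.Adj k j then
          f k j ‖pt p k - pt p j‖ * (inner ℝ (pt p k - pt p j) (pt v k - pt v j) : ℝ) else 0)
          = (inner ℝ (if G.Adj k j then
              f k j (dist (pt p k) (pt p j)) • (pt p k - pt p j) else 0) w : ℝ) := by
        intro j
        by_cases h : G.Adj k j
        · rw [if_pos h, if_pos h, hptv k, hptv j, if_pos rfl, if_neg h.ne',
            real_inner_smul_left, dist_eq_norm]
          simp
        · rw [if_neg h, if_neg h, inner_zero_left]
      rw [Finset.sum_congr rfl (fun j _ => hTk j)] at hksum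
      rw [sum_inner]
      exact hksum
    have h2 := hscal (∑ j : ι, (if G.Adj k j then
      f k j (dist (pt p k) (pt p j)) • (pt p k - pt p j) else 0))
    exact inner_self_eq_zero.mp h2
  have hwt : ∀ i j, G.Adj i j → f i j (dist (pt p i) (pt p j)) = 0 := by
    rcases hsys.laman with hle | hne
    · exfalso
      have h3 := hsys.morse.2 p hp hcrit
      have hle2 := nZero_le_aux (hessianMat (potential G f) p)
      rw [h3] at hle2
      have hle3 : (3:ℕ) ≤ Nat.card ι * 2 := by
        simpa [Nat.card_prod, Nat.card_eq_fintype_card] using hle2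
      omega
    · obtain ⟨H⟩ := hne
      exact weights_zero_aux H hp
        (fun i j => by rw [hsys.fsymm i j, dist_comm]) hsr hwt0
  have hdistdbar : ∀ i j, G.Adj i j → dist (pt p i) (pt p j) = dbar i j := by
    intro i j h
    obtain ⟨x0, hx0, huniq⟩ := (hsys.mono i j h).unique_zero
    have h1 := huniq _ ⟨dist_pos.mpr (hp i j h), hwt i j h⟩
    have h2 := huniq _ ⟨hsys.dpos i j h, hsys.fzero i j h⟩
    rw [h1, h2]
  -- second derivative is positive semidefinite
  have hBd : DifferentiableAt ℝ (fderiv ℝ (potential G f)) p :=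
    ((hΦ2 p hp).fderiv_right (m := 1) (by norm_num)).differentiableAt one_ne_zero
  have hderivpos : ∀ i j, G.Adj i j → 0 < deriv (f i j) ‖pt p i - pt p j‖ := by
    intro i j h
    have hdp : 0 < dist (pt p i) (pt p j) := dist_pos.mpr (hp i j h)
    have hd := (hsys.mono i j h).deriv_pos _ hdp
    have hfd : DifferentiableAt ℝ (f i j) (dist (pt p i) (pt p j)) :=
      ((hf1 i j h).contDiffAt (Ioi_mem_nhds hdp)).differentiableAt one_ne_zero
    have hdm : deriv (fun y => y * f i j y) (dist (pt p i) (pt p j))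
        = 1 * f i j (dist (pt p i) (pt p j))
          + dist (pt p i) (pt p j) * deriv (f i j) (dist (pt p i) (pt p j)) :=
      ((hasDerivAt_id _).mul hfd.hasDerivAt).deriv
    rw [hdm, hwt i j h] at hd
    simp only [mul_zero, one_mul, zero_add] at hd
    rw [← dist_eq_norm]
    by_contra hcon
    push_neg at hcon
    nlinarith
  have hBnn : ∀ v : Conf ι, 0 ≤ fderiv ℝ (fderiv ℝ (potential G f)) p v v := by
    intro v
    have hφ : HasDerivAt (fun t : ℝ => fderiv ℝ (potential G f) (p + t • v) v)
        (fderiv ℝ (fderiv ℝ (potential G f)) p v v) 0 := by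
      have h1 := hBd.hasFDerivAt
      have hp0 : p = p + (0:ℝ) • v := by simp
      rw [hp0] at h1
      have h2 := h1.comp_hasDerivAt 0 (hlinemap v 0)
      have h3 := (ContinuousLinearMap.apply ℝ ℝ v).hasFDerivAt.comp_hasDerivAt 0 h2
      simpa [Function.comp_def] using h3
    have hev : (fun t : ℝ => fderiv ℝ (potential G f) (p + t • v) v)
        =ᶠ[nhds (0:ℝ)] (fun t => (1/2) * ∑ i : ι, ∑ j : ι, if G.Adj i j then
            f i j ‖(pt p i - pt p j) + t • (pt v i - pt v j)‖ *
              ((inner ℝ (pt p i - pt p j) (pt v i - pt v j) : ℝ)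
                + ‖pt v i - pt v j‖^2 * t) else 0) := by
      have hmem : ∀ᶠ t : ℝ in nhds 0, p + t • v ∈ configSpace G := by
        have hc : Continuous fun t : ℝ => p + t • v :=
          continuous_const.add (continuous_id.smul continuous_const)
        apply (hc.continuousAt (x := 0)).preimage_mem_nhds
        have hpt0 : p + (0:ℝ) • v = p := by simp
        rw [hpt0]
        exact (configSpace_isOpen_aux G).mem_nhds hp
      filter_upwards [hmem] with t ht
      have hq2 : DifferentiableAt ℝ (potential G f) (p + t • v) :=
        (hΦ2 _ ht).differentiableAt (by norm_num)
      have h1 : HasDerivAt (fun s : ℝ => potential G f (p + s • v))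
          (fderiv ℝ (potential G f) (p + t • v) v) t :=
        by simpa only [Function.comp_def] using hq2.hasFDerivAt.comp_hasDerivAt t (hlinemap v t)
      exact h1.unique (hline v t ht)
    have hW1 : HasDerivAt (fun t : ℝ => (1/2) * ∑ i : ι, ∑ j : ι, if G.Adj i j then
            f i j ‖(pt p i - pt p j) + t • (pt v i - pt v j)‖ *
              ((inner ℝ (pt p i - pt p j) (pt v i - pt v j) : ℝ)
                + ‖pt v i - pt v j‖^2 * t) else 0)
        ((1/2) * ∑ i : ι, ∑ j : ι, if G.Adj i j then
            deriv (f i j) ‖pt p i - pt p j‖ *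
              ((inner ℝ (pt p i - pt p j) (pt v i - pt v j) : ℝ) / ‖pt p i - pt p j‖) *
              (inner ℝ (pt p i - pt p j) (pt v i - pt v j) : ℝ) else 0) 0 := by
      apply HasDerivAt.const_mul
      apply HasDerivAt.fun_sum
      intro i _
      apply HasDerivAt.fun_sum
      intro j _
      by_cases h : G.Adj i j
      · simp only [if_pos h]
        have hane : pt p i - pt p j ≠ 0 := sub_ne_zero.mpr (hp i j h)
        have hA := fcomp_hasDerivAt_aux (hf1 i j h) (pt p i - pt p j) (pt v i - pt v j) hane
        have hBt : HasDerivAt (fun t : ℝ =>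
            (inner ℝ (pt p i - pt p j) (pt v i - pt v j) : ℝ) + ‖pt v i - pt v j‖^2 * t)
            (‖pt v i - pt v j‖^2) 0 := by
          simpa using (((hasDerivAt_id (0:ℝ)).const_mul (‖pt v i - pt v j‖^2)).const_add
            ((inner ℝ (pt p i - pt p j) (pt v i - pt v j) : ℝ)))
        have hprod := hA.mul hBt
        have h0n : ‖(pt p i - pt p j) + (0:ℝ) • (pt v i - pt v j)‖ = ‖pt p i - pt p j‖ := by
          simp
        have hfz : f i j ‖pt p i - pt p j‖ = 0 := by
          rw [← dist_eq_norm]; exact hwt i j h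
        convert hprod using 1
        · rfl
        · rfl
        · simp only [h0n, hfz, mul_zero, add_zero, zero_mul]
      · simp only [if_neg h]
        exact hasDerivAt_const _ _
    have hBS : fderiv ℝ (fderiv ℝ (potential G f)) p v v
        = (1/2) * ∑ i : ι, ∑ j : ι, (if G.Adj i j then
            deriv (f i j) ‖pt p i - pt p j‖ *
              ((inner ℝ (pt p i - pt p j) (pt v i - pt v j) : ℝ) / ‖pt p i - pt p j‖) *
              (inner ℝ (pt p i - pt p j) (pt v i - pt v j) : ℝ) else 0) :=
      hφ.unique (hW1.congr_of_eventuallyEq hev)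
    rw [hBS]
    apply mul_nonneg (by norm_num)
    apply Finset.sum_nonneg; intro i _
    apply Finset.sum_nonneg; intro j _
    by_cases h : G.Adj i j
    · rw [if_pos h]
      rw [show deriv (f i j) ‖pt p i - pt p j‖ *
          ((inner ℝ (pt p i - pt p j) (pt v i - pt v j) : ℝ) / ‖pt p i - pt p j‖) *
          (inner ℝ (pt p i - pt p j) (pt v i - pt v j) : ℝ)
        = deriv (f i j) ‖pt p i - pt p j‖ *
          ((inner ℝ (pt p i - pt p j) (pt v i - pt v j) : ℝ) *
            (inner ℝ (pt p i - pt p j) (pt v i - pt v j) : ℝ)) / ‖pt p i - pt p j‖ by ring]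
      exact div_nonneg (mul_nonneg (hderivpos i j h).le (mul_self_nonneg _)) (norm_nonneg _)
    · rw [if_neg h]
  -- translate into matrix language
  have hHB : ∀ x y : ι × Fin 2, hessianMat (potential G f) p x y
      = fderiv ℝ (fderiv ℝ (potential G f)) p (EuclideanSpace.single x 1)
          (EuclideanSpace.single y 1) := by
    intro x y
    show iteratedFDeriv ℝ 2 (potential G f) p
      ![EuclideanSpace.single x 1, EuclideanSpace.single y 1] = _
    rw [iteratedFDeriv_two_apply]
    simp
  have hsymmB : ∀ v w : Conf ι, fderiv ℝ (fderiv ℝ (potential G f)) p v w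
      = fderiv ℝ (fderiv ℝ (potential G f)) p w v :=
    fun v w => (hΦ2 p hp).isSymmSndFDerivAt (by simp [minSmoothness_of_isRCLikeNormedField]) v w
  have hHerm : (hessianMat (potential G f) p).IsHermitian := by
    ext x y
    rw [Matrix.conjTranspose_apply, star_trivial, hHB, hHB]
    exact hsymmB _ _
  have hdecomp : ∀ y : Conf ι, ∑ x : ι × Fin 2, y x • EuclideanSpace.single x (1:ℝ) = y := by
    intro y
    ext b
    have hs : ∀ (s : Finset (ι × Fin 2)),
        (∑ x ∈ s, y x • EuclideanSpace.single x (1:ℝ)) b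
          = ∑ x ∈ s, y x * (EuclideanSpace.single x (1:ℝ)) b := by
      intro s
      induction s using Finset.cons_induction with
      | empty => rfl
      | cons a s ha ih => rw [Finset.sum_cons, Finset.sum_cons, ← ih]; rfl
    rw [hs]
    simp [EuclideanSpace.single_apply]
  have hquad : ∀ x : (ι × Fin 2) → ℝ,
      dotProduct (star x) ((hessianMat (potential G f) p).mulVec x)
        = fderiv ℝ (fderiv ℝ (potential G f)) p (WithLp.toLp 2 x) (WithLp.toLp 2 x) := by
    intro x
    calc dotProduct (star x) ((hessianMat (potential G f) p).mulVec x)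
        = ∑ a : ι × Fin 2, ∑ b : ι × Fin 2, x a * (x b *
            fderiv ℝ (fderiv ℝ (potential G f)) p (EuclideanSpace.single a 1)
              (EuclideanSpace.single b 1)) := by
          simp only [dotProduct, Matrix.mulVec, Pi.star_apply, star_trivial]
          apply Finset.sum_congr rfl; intro a _
          rw [Finset.mul_sum]
          apply Finset.sum_congr rfl; intro b _
          rw [hHB]
          ring
      _ = fderiv ℝ (fderiv ℝ (potential G f)) p (WithLp.toLp 2 x) (WithLp.toLp 2 x) := by
          conv_rhs => rw [← hdecomp (WithLp.toLp 2 x)]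
          simp only [PiLp.toLp_apply, map_sum, map_smul, ContinuousLinearMap.sum_apply,
            ContinuousLinearMap.smul_apply, smul_eq_mul, Finset.mul_sum]
          refine Finset.sum_congr rfl fun a _ => Finset.sum_congr rfl fun b _ => by
            rw [hsymmB]
  have hpsd : (hessianMat (potential G f) p).PosSemidef := by
    rw [Matrix.posSemidef_iff_dotProduct_mulVec]
    constructor
    · exact hHerm
    · intro x
      rw [hquad x]
      exact hBnn (WithLp.toLp 2 x)
  have hpsd' : ∀ (inst : Fintype (ι × Fin 2)) (dec : DecidableEq (ι × Fin 2))
      (hh : (hessianMat (potential G f) p).IsHermitian) (i : ι × Fin 2),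
      0 ≤ hh.eigenvalues i := by
    intro inst dec hh i
    have hi : inst = instFintypeProd ι (Fin 2) := Subsingleton.elim _ _
    subst hi
    have hd : dec = (instDecidableEqProd : DecidableEq (ι × Fin 2)) := Subsingleton.elim _ _
    subst hd
    exact hpsd.eigenvalues_nonneg i
  have h3 := hsys.morse.2 p hp hcrit
  have h4 : nNeg (hessianMat (potential G f) p) = 0 := nNeg_eq_zero_aux hpsd' hHerm
  have h5 := nPos_add_nZero_aux hpsd' hHerm
  have hcard2 : Nat.card (ι × Fin 2) = 2 * n := by
    rw [Nat.card_prod, Nat.card_eq_fintype_card, Nat.card_eq_fintype_card, hcard]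
    simp [mul_comm]
  refine ⟨?_, h4, h3, fun i j hadj => hdistdbar i j hadj⟩
  rw [h3, hcard2] at h5
  omega
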